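/- The set L(n₁,...,n_k; n) of k-fold lattice paths is in bijection with the set of pairs ((x₁,...,x_k), ≤) where each xᵢ : [nᵢ] → [n] is a monotone map and ≤ is a linear order on the disjoint union [n₁] ⊔ ... ⊔ [n_k] restricting to the natural order on each [nᵢ] and compatible with the maps xᵢ (i.e. if a ≤ b in the linear order then the images under the corresponding xᵢ's satisfy x(a) ≤ x(b) in [n]). -/

import Mathlib

open Finset Function

namespace LatticeDual

variable {k n : ℕ} {ns : Fin k → ℕ}

lemma cardS (ns : Fin k → ℕ) :
    Fintype.card (Σ i : Fin k, Fin (ns i + 1)) = ∑ i, (ns i + 1) := by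
  simp [Fintype.card_sigma]

def sigmaFstEquiv {β : Fin k → Type*} (i : Fin k) :
    {s : Σ j, β j // s.1 = i} ≃ β i where
  toFun s := s.2 ▸ s.1.2
  invFun b := ⟨⟨i, b⟩, rfl⟩
  left_inv := by rintro ⟨⟨j, b⟩, h⟩; subst h; rfl
  right_inv b := rfl

lemma x_apply_congr (x : ∀ i : Fin k, Fin (ns i + 1) →o Fin (n + 1))
    {s s' : Σ i : Fin k, Fin (ns i + 1)} (h : s = s') : x s.1 s.2 = x s'.1 s'.2 := by
  subst h; rfl

noncomputable def E (f : Fin (∑ i, (ns i + 1)) → Fin k)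
    (hf : ∀ i : Fin k, (Finset.univ.filter (fun t => f t = i)).card = ns i + 1) :
    (Σ i : Fin k, Fin (ns i + 1)) → Fin (∑ i, (ns i + 1)) :=
  fun s => ((Finset.univ.filter (fun t => f t = s.1)).orderIsoOfFin (hf s.1) s.2 : Fin _)

lemma E_mem (f : Fin (∑ i, (ns i + 1)) → Fin k)
    (hf : ∀ i : Fin k, (Finset.univ.filter (fun t => f t = i)).card = ns i + 1)
    (s : Σ i : Fin k, Fin (ns i + 1)) : f (E f hf s) = s.1 := by
  obtain ⟨i, j⟩ := s
  have h2 := ((Finset.univ.filter (fun t => f t = i)).orderIsoOfFin (hf i) j).2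
  rw [Finset.mem_filter] at h2
  exact h2.2

lemma E_strictMono (f : Fin (∑ i, (ns i + 1)) → Fin k)
    (hf : ∀ i : Fin k, (Finset.univ.filter (fun t => f t = i)).card = ns i + 1) (i : Fin k) :
    StrictMono (fun j => E f hf ⟨i, j⟩) := by
  intro a b hab
  exact ((Finset.univ.filter (fun t => f t = i)).orderIsoOfFin (hf i)).strictMono hab

lemma E_inj (f : Fin (∑ i, (ns i + 1)) → Fin k)
    (hf : ∀ i : Fin k, (Finset.univ.filter (fun t => f t = i)).card = ns i + 1) :
    Injective (E f hf) := by
  rintro ⟨i, j⟩ ⟨i', j'⟩ h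
  have h1 := E_mem f hf ⟨i, j⟩
  rw [h] at h1
  have hii : i = i' := h1.symm.trans (E_mem f hf ⟨i', j'⟩)
  subst hii
  have : ((Finset.univ.filter (fun t => f t = i)).orderIsoOfFin (hf i)) j
      = ((Finset.univ.filter (fun t => f t = i)).orderIsoOfFin (hf i)) j' :=
    Subtype.ext h
  simpa using ((Finset.univ.filter (fun t => f t = i)).orderIsoOfFin (hf i)).injective this

lemma E_bij (f : Fin (∑ i, (ns i + 1)) → Fin k)
    (hf : ∀ i : Fin k, (Finset.univ.filter (fun t => f t = i)).card = ns i + 1) :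
    Bijective (E f hf) :=
  (Fintype.bijective_iff_injective_and_card _).2 ⟨E_inj f hf, by simp [cardS]⟩

noncomputable def LofE (f : Fin (∑ i, (ns i + 1)) → Fin k)
    (hf : ∀ i : Fin k, (Finset.univ.filter (fun t => f t = i)).card = ns i + 1) :
    LinearOrder (Σ i : Fin k, Fin (ns i + 1)) :=
  LinearOrder.lift' (E f hf) (E_inj f hf)

lemma LofE_le_iff (f : Fin (∑ i, (ns i + 1)) → Fin k)
    (hf : ∀ i : Fin k, (Finset.univ.filter (fun t => f t = i)).card = ns i + 1) (u v) :
    (LofE f hf).le u v ↔ E f hf u ≤ E f hf v := Iff.rfl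

noncomputable def EIso (f : Fin (∑ i, (ns i + 1)) → Fin k)
    (hf : ∀ i : Fin k, (Finset.univ.filter (fun t => f t = i)).card = ns i + 1) :
    @OrderIso (Σ i : Fin k, Fin (ns i + 1)) (Fin (∑ i, (ns i + 1))) (LofE f hf).toLE _ :=
  { toEquiv := Equiv.ofBijective (E f hf) (E_bij f hf)
    map_rel_iff' := Iff.rfl }

noncomputable def mIso (L : LinearOrder (Σ i : Fin k, Fin (ns i + 1))) :
    @OrderIso (Fin (∑ i, (ns i + 1))) (Σ i : Fin k, Fin (ns i + 1)) _ L.toLE :=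
  @monoEquivOfFin _ _ L _ (cardS ns)

lemma mIso_eq (f : Fin (∑ i, (ns i + 1)) → Fin k)
    (hf : ∀ i : Fin k, (Finset.univ.filter (fun t => f t = i)).card = ns i + 1) :
    mIso (LofE f hf) = @OrderIso.symm _ _ (LofE f hf).toLE _ (EIso f hf) := by
  haveI : Subsingleton
      (@OrderIso (Fin (∑ i, (ns i + 1))) (Σ i : Fin k, Fin (ns i + 1)) _ (LofE f hf).toLE) :=
    @OrderIso.subsingleton_of_wellFoundedLT (Fin (∑ i, (ns i + 1))) _ inferInstance
      (inferInstance : WellFoundedLT (Fin (∑ i, (ns i + 1)))) (LofE f hf).toPreorder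
  exact Subsingleton.elim _ _

lemma E_mIso (f : Fin (∑ i, (ns i + 1)) → Fin k)
    (hf : ∀ i : Fin k, (Finset.univ.filter (fun t => f t = i)).card = ns i + 1)
    (t : Fin (∑ i, (ns i + 1))) : E f hf (mIso (LofE f hf) t) = t := by
  rw [mIso_eq]
  exact (EIso f hf).toEquiv.apply_symm_apply t

def LHS (k n : ℕ) (ns : Fin k → ℕ) : Type :=
  { f : Fin (∑ i, (ns i + 1)) → Fin k //
      ∀ i : Fin k, (Finset.univ.filter (fun t => f t = i)).card = ns i + 1 }
    × (Fin (∑ i, (ns i + 1)) →o Fin (n+1))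

def RHS (k n : ℕ) (ns : Fin k → ℕ) : Type :=
  { q : ((i : Fin k) → (Fin (ns i + 1) →o Fin (n+1)))
        × LinearOrder (Σ i : Fin k, Fin (ns i + 1)) //
      (∀ (i : Fin k) (a b : Fin (ns i + 1)), a ≤ b → q.2.le ⟨i, a⟩ ⟨i, b⟩) ∧
      (∀ u v : Σ i : Fin k, Fin (ns i + 1),
        q.2.le u v → q.1 u.1 u.2 ≤ q.1 v.1 v.2) }

noncomputable def F (p : LHS k n ns) : RHS k n ns :=
  ⟨⟨fun i => ⟨fun j => p.2 (E p.1.1 p.1.2 ⟨i, j⟩),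
      fun a b hab => p.2.monotone ((E_strictMono p.1.1 p.1.2 i).monotone hab)⟩,
    LofE p.1.1 p.1.2⟩,
   fun i a b hab => (E_strictMono p.1.1 p.1.2 i).monotone hab,
   fun u v huv => p.2.monotone huv⟩

lemma mIso_mono (L : LinearOrder (Σ i : Fin k, Fin (ns i + 1)))
    {a b : Fin (∑ i, (ns i + 1))} (h : a ≤ b) : L.le (mIso L a) (mIso L b) :=
  (@OrderIso.le_iff_le _ _ _ L.toLE (mIso L) a b).mpr h

noncomputable def mSymm (L : LinearOrder (Σ i : Fin k, Fin (ns i + 1))) :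
    @OrderIso (Σ i : Fin k, Fin (ns i + 1)) (Fin (∑ i, (ns i + 1))) L.toLE _ :=
  @OrderIso.symm _ _ _ L.toLE (mIso L)

lemma mSymm_strictMono (L : LinearOrder (Σ i : Fin k, Fin (ns i + 1))) :
    @StrictMono _ _ L.toPreorder _ (mSymm L) :=
  @OrderIso.strictMono _ _ L.toPreorder _ (mSymm L)

noncomputable def G (q : RHS k n ns) : LHS k n ns :=
  ⟨⟨fun t => (mIso q.1.2 t).1, fun i =>
      calc (Finset.univ.filter (fun t => (mIso q.1.2 t).1 = i)).card
          = Fintype.card {t // (mIso q.1.2 t).1 = i} := (Fintype.card_subtype _).symm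
        _ = Fintype.card (Fin (ns i + 1)) := Fintype.card_congr
            (((mIso q.1.2).toEquiv.subtypeEquiv (fun t => Iff.rfl)).trans (sigmaFstEquiv i))
        _ = ns i + 1 := Fintype.card_fin _⟩,
   ⟨fun t => q.1.1 (mIso q.1.2 t).1 (mIso q.1.2 t).2,
    fun a b hab => q.2.2 _ _ (mIso_mono q.1.2 hab)⟩⟩

lemma left_inv_aux (p : LHS k n ns) : G (F p) = p := by
  obtain ⟨⟨f, hf⟩, g⟩ := p
  refine Prod.ext (Subtype.ext ?_) (OrderHom.ext _ _ ?_)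
  · funext t
    exact (E_mem f hf (mIso (LofE f hf) t)).symm.trans (congrArg f (E_mIso f hf t))
  · funext t
    exact congrArg g (E_mIso f hf t)


lemma E_eq_mSymm (L : LinearOrder (Σ i : Fin k, Fin (ns i + 1)))
    (h1 : ∀ (i : Fin k) (a b : Fin (ns i + 1)), a ≤ b → L.le ⟨i, a⟩ ⟨i, b⟩)
    (hf : ∀ i : Fin k,
      (Finset.univ.filter (fun t => ((mIso L t).1 : Fin k) = i)).card = ns i + 1)
    (s : Σ i : Fin k, Fin (ns i + 1)) :
    E (fun t => (mIso L t).1) hf s = mSymm L s := by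
  obtain ⟨i, j⟩ := s
  have hA : StrictMono (fun j => E (fun t => (mIso L t).1) hf ⟨i, j⟩) :=
    E_strictMono _ hf i
  have hB : StrictMono (fun j : Fin (ns i + 1) => mSymm L ⟨i, j⟩) := by
    intro a b hab
    refine mSymm_strictMono L ?_
    refine (@Preorder.lt_iff_le_not_ge _ L.toPreorder ⟨i, a⟩ ⟨i, b⟩).mpr ⟨h1 i a b hab.le, fun hc => ?_⟩
    have he : (⟨i, a⟩ : Σ i : Fin k, Fin (ns i + 1)) = ⟨i, b⟩ :=
      L.le_antisymm _ _ (h1 i a b hab.le) hc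
    have : a = b := by cases he; rfl
    exact hab.ne this
  have hrA : Set.range (fun j => E (fun t => (mIso L t).1) hf ⟨i, j⟩)
      = ↑(Finset.univ.filter (fun t => ((mIso L t).1 : Fin k) = i)) := by
    have he : (fun j => E (fun t => (mIso L t).1) hf ⟨i, j⟩)
        = ⇑((Finset.univ.filter (fun t => ((mIso L t).1 : Fin k) = i)).orderEmbOfFin (hf i)) :=
      funext fun j => Finset.coe_orderIsoOfFin_apply _ _ _
    rw [he, Finset.range_orderEmbOfFin]
  have hrB : Set.range (fun j : Fin (ns i + 1) => mSymm L ⟨i, j⟩)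
      = ↑(Finset.univ.filter (fun t => ((mIso L t).1 : Fin k) = i)) := by
    ext t
    simp only [Set.mem_range, Finset.coe_filter, Finset.mem_univ, true_and, Set.mem_setOf_eq]
    constructor
    · rintro ⟨j, rfl⟩
      have : mIso L (mSymm L ⟨i, j⟩) = ⟨i, j⟩ := (mIso L).toEquiv.apply_symm_apply _
      rw [this]
    · intro h
      refine ⟨h ▸ (mIso L t).2, ?_⟩
      have hs : (⟨i, h ▸ (mIso L t).2⟩ : Σ i : Fin k, Fin (ns i + 1)) = mIso L t := by
        subst h; rfl
      rw [hs]
      exact (mIso L).toEquiv.symm_apply_apply t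
  haveI : WellFoundedLT (Fin (ns i + 1)) := inferInstance
  have := (StrictMono.range_inj (β := Fin (ns i + 1)) hA hB).mp (hrA.trans hrB.symm)
  exact congrFun this j

lemma right_inv_aux (q : RHS k n ns) : F (G q) = q := by
  obtain ⟨⟨x, L⟩, h1, h2⟩ := q
  apply Subtype.ext
  dsimp only [F, G]
  have key : ∀ s, E (fun t => (mIso L t).1) (G ⟨⟨x, L⟩, h1, h2⟩).1.2 s = mSymm L s :=
    E_eq_mSymm L h1 _
  refine Prod.ext ?_ ?_
  · funext i
    refine OrderHom.ext _ _ (funext fun j => ?_)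
    show x (mIso L (E (fun t => (mIso L t).1) _ ⟨i, j⟩)).1
        (mIso L (E (fun t => (mIso L t).1) _ ⟨i, j⟩)).2 = x i j
    rw [key ⟨i, j⟩]
    exact x_apply_congr x ((mIso L).toEquiv.apply_symm_apply ⟨i, j⟩)
  · refine LinearOrder.ext fun u v => ?_
    show (LofE _ _).le u v ↔ L.le u v
    have hk := @OrderIso.le_iff_le _ _ L.toLE _ (mSymm L) u v
    rw [← key u, ← key v] at hk
    exact hk

noncomputable def myEquiv (k n : ℕ) (ns : Fin k → ℕ) : LHS k n ns ≃ RHS k n ns where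
  toFun := F
  invFun := G
  left_inv := left_inv_aux
  right_inv := right_inv_aux

end LatticeDual


/-- Dual description of the lattice path operad: the set `L(n₁,…,n_k;n)` of subdivided
integer-strings (words with `nᵢ+1` occurrences of each letter `i`, subdivided into `n+1`
consecutive blocks) is in bijection with the set of pairs `((x₁,…,x_k), ≤)` where each
`xᵢ : [nᵢ] → [n]` is monotone and `≤` is a linear order on `[n₁] ⊔ … ⊔ [n_k]` restricting
to the natural order on each `[nᵢ]` and compatible with the maps `xᵢ`. -/
theorem lattice_paths_dual_description (k n : ℕ) (ns : Fin k → ℕ) :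
    Nonempty (
      ({ f : Fin (∑ i, (ns i + 1)) → Fin k //
          ∀ i : Fin k, (Finset.univ.filter (fun t => f t = i)).card = ns i + 1 }
        × (Fin (∑ i, (ns i + 1)) →o Fin (n+1)))
      ≃
      { q : ((i : Fin k) → (Fin (ns i + 1) →o Fin (n+1)))
            × LinearOrder (Σ i : Fin k, Fin (ns i + 1)) //
          (∀ (i : Fin k) (a b : Fin (ns i + 1)), a ≤ b → q.2.le ⟨i, a⟩ ⟨i, b⟩) ∧
          (∀ u v : Σ i : Fin k, Fin (ns i + 1),
            q.2.le u v → q.1 u.1 u.2 ≤ q.1 v.1 v.2) }) := by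
  exact ⟨LatticeDual.myEquiv k n ns⟩
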